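/- Let Φ be a reduced crystallographic root system with simple roots α_1, …, α_n, coroot lattice R^∨, coweight lattice Q^∨, and Weyl group W. Let η ∈ Q^∨ with ⟨α_i, η⟩ = 1, set ν := A_{s_i}η and b := t^η s_i ∈ W̃. Let u ∈ W and let ζ ∈ (u(ν + ℝα_i^∨)) ∩ (η + R^∨). Then: (1) there exists an integer d ∈ ℤ such that u⁻¹ζ − η = d·α_i^∨; and (2) for this d, setting y := t^{d·uη} u ∈ W̃, one has y b y⁻¹ = t^ζ (u s_i u⁻¹). -/

import Mathlib

open scoped RealInnerProductSpace

namespace ADLV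

variable {V : Type*} [NormedAddCommGroup V] [InnerProductSpace ℝ V]

/-- The coroot `α^∨ = 2α/(α,α)` of a root `α`. -/
noncomputable def coroot (α : V) : V := (2 / ⟪α, α⟫) • α

/-- The reflection `s_α : x ↦ x - ⟨α, x⟩ α^∨` in the hyperplane orthogonal to `α`,
as a linear automorphism. -/
noncomputable def sRefl (α : V) (hα : α ≠ 0) : V ≃ₗ[ℝ] V :=
  Module.reflection (f := (innerSL ℝ α : V →ₗ[ℝ] ℝ)) (x := coroot α)
    (by
      have h : ⟪α, α⟫ ≠ 0 := inner_self_ne_zero.mpr hα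
      simp [coroot, real_inner_smul_right]
      field_simp)

/-- The averaging operator `A_w = (1/m)(I + w + w² + ⋯ + w^{m-1})`. -/
noncomputable def avgProj (m : ℕ) (w : V ≃ₗ[ℝ] V) : V →ₗ[ℝ] V :=
  (m : ℝ)⁻¹ • ∑ i ∈ Finset.range m, ((w ^ i : V ≃ₗ[ℝ] V) : V →ₗ[ℝ] V)

/-- The (finite) Weyl group: the group generated by the simple reflections. -/
noncomputable def weylGroup {n : ℕ} (α : Fin n → V) (hα : ∀ j, α j ≠ 0) :
    Subgroup (V ≃ₗ[ℝ] V) :=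
  Subgroup.closure (Set.range fun j => sRefl (α j) (hα j))

/-- The coroot lattice `R^∨ = ⊕_j ℤ α_j^∨`. -/
noncomputable def corootLattice {n : ℕ} (α : Fin n → V) : AddSubgroup V :=
  AddSubgroup.closure (Set.range fun j => coroot (α j))

/-- The coweight lattice `Q^∨ = {x : ⟨α_j, x⟩ ∈ ℤ for all j}`. -/
def coweightLattice {n : ℕ} (α : Fin n → V) : Set V :=
  {x : V | ∀ j, ∃ m : ℤ, ⟪α j, x⟫ = (m : ℝ)}

/-- Elements `t^μ u` of the (extended) affine Weyl group `Q^∨ ⋊ W`, realized inside the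
semidirect product `V ⋊ GL(V)` with multiplication `(t^μ u)(t^λ v) = t^{μ + uλ}(uv)`. -/
@[ext]
structure Aff (V : Type*) [NormedAddCommGroup V] [InnerProductSpace ℝ V] where
  /-- the translation part -/
  t : V
  /-- the linear part -/
  w : V ≃ₗ[ℝ] V

namespace Aff

instance : Mul (Aff V) := ⟨fun a b => ⟨a.t + a.w b.t, a.w * b.w⟩⟩
instance : One (Aff V) := ⟨⟨0, 1⟩⟩
instance : Inv (Aff V) := ⟨fun a => ⟨-(a.w⁻¹ a.t), a.w⁻¹⟩⟩

@[simp] lemma mul_t (a b : Aff V) : (a * b).t = a.t + a.w b.t := rfl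
@[simp] lemma mul_w (a b : Aff V) : (a * b).w = a.w * b.w := rfl
@[simp] lemma one_t : (1 : Aff V).t = 0 := rfl
@[simp] lemma one_w : (1 : Aff V).w = 1 := rfl
@[simp] lemma inv_t (a : Aff V) : (a⁻¹).t = -(a.w⁻¹ a.t) := rfl
@[simp] lemma inv_w (a : Aff V) : (a⁻¹).w = a.w⁻¹ := rfl

lemma mul_apply_w (f g : V ≃ₗ[ℝ] V) (x : V) : (f * g) x = f (g x) := rfl

instance : Group (Aff V) where
  mul_assoc a b c := by
    refine Aff.ext ?_ ?_
    · simp [mul_apply_w, map_add, add_assoc]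
    · simp [mul_assoc]
  one_mul a := by refine Aff.ext ?_ ?_ <;> simp
  mul_one a := by refine Aff.ext ?_ ?_ <;> simp
  inv_mul_cancel a := by
    refine Aff.ext ?_ ?_
    · simp [mul_apply_w]
    · simp

end Aff


-- auxiliary lemmas

lemma sRefl_apply (α : V) (hα : α ≠ 0) (x : V) :
    sRefl α hα x = x - ⟪α, x⟫ • coroot α := by
  simp [sRefl, Module.reflection_apply]

lemma sRefl_inv (α : V) (hα : α ≠ 0) : (sRefl α hα)⁻¹ = sRefl α hα := by
  have : (sRefl α hα).symm = sRefl α hα := Module.reflection_symm _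
  exact this

lemma corootLattice_smul_mem {n : ℕ} (α : Fin n → V) (m : ℤ) (j : Fin n) :
    (m : ℝ) • coroot (α j) ∈ corootLattice α := by
  have h1 : coroot (α j) ∈ corootLattice α :=
    AddSubgroup.subset_closure ⟨j, rfl⟩
  have := AddSubgroup.zsmul_mem _ h1 m
  rwa [Int.cast_smul_eq_zsmul ℝ m (coroot (α j))]

lemma weyl_maps_lattice {n : ℕ} (α : Fin n → V) (hα : ∀ j, α j ≠ 0)
    (hcart : ∀ k j, ∃ m : ℤ, ⟪α k, coroot (α j)⟫ = (m : ℝ))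
    (w : V ≃ₗ[ℝ] V) (hw : w ∈ weylGroup α hα) :
    (∀ x ∈ corootLattice α, w x ∈ corootLattice α) ∧
    (∀ x ∈ corootLattice α, w⁻¹ x ∈ corootLattice α) := by
  induction hw using Subgroup.closure_induction with
  | mem s hs =>
    obtain ⟨j, rfl⟩ := hs
    have key : ∀ x ∈ corootLattice α, sRefl (α j) (hα j) x ∈ corootLattice α := by
      intro x hx
      induction hx using AddSubgroup.closure_induction with
      | mem y hy =>
        obtain ⟨k, rfl⟩ := hy
        obtain ⟨m, hm⟩ := hcart j k
        rw [sRefl_apply, hm]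
        exact AddSubgroup.sub_mem _ (AddSubgroup.subset_closure ⟨k, rfl⟩)
          (corootLattice_smul_mem α m j)
      | zero => simpa using AddSubgroup.zero_mem _
      | add y z _ _ hy hz => rw [map_add]; exact AddSubgroup.add_mem _ hy hz
      | neg y _ hy => rw [map_neg]; exact AddSubgroup.neg_mem _ hy
    exact ⟨key, by rw [sRefl_inv]; exact key⟩
  | one => constructor <;> (intro x hx; simpa using hx)
  | mul a b _ _ ha hb =>
    constructor
    · intro x hx
      rw [Aff.mul_apply_w]
      exact ha.1 _ (hb.1 _ hx)
    · intro x hx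
      rw [mul_inv_rev, Aff.mul_apply_w]
      exact hb.2 _ (ha.2 _ hx)
  | inv a _ ha => exact ⟨ha.2, by simpa using ha.1⟩

lemma weyl_coweight_sub {n : ℕ} (α : Fin n → V) (hα : ∀ j, α j ≠ 0)
    (hcart : ∀ k j, ∃ m : ℤ, ⟪α k, coroot (α j)⟫ = (m : ℝ))
    (η : V) (hη : η ∈ coweightLattice α)
    (w : V ≃ₗ[ℝ] V) (hw : w ∈ weylGroup α hα) :
    w η - η ∈ corootLattice α ∧ w⁻¹ η - η ∈ corootLattice α := by
  induction hw using Subgroup.closure_induction with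
  | mem s hs =>
    obtain ⟨j, rfl⟩ := hs
    have key : sRefl (α j) (hα j) η - η ∈ corootLattice α := by
      obtain ⟨m, hm⟩ := hη j
      rw [sRefl_apply, hm]
      have := corootLattice_smul_mem α (-m) j
      simpa [sub_sub_cancel_left, neg_smul] using this
    exact ⟨key, by rw [sRefl_inv]; exact key⟩
  | one => constructor <;> simpa using AddSubgroup.zero_mem _
  | mul a b ha' hb' ha hb =>
    constructor
    · have : (a * b) η - η = a (b η - η) + (a η - η) := by
        rw [Aff.mul_apply_w, map_sub]; abel
      rw [this]
      exact AddSubgroup.add_mem _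
        ((weyl_maps_lattice α hα hcart a ha').1 _ hb.1) ha.1
    · have : (a * b)⁻¹ η - η = b⁻¹ (a⁻¹ η - η) + (b⁻¹ η - η) := by
        rw [mul_inv_rev, Aff.mul_apply_w, map_sub]; abel
      rw [this]
      exact AddSubgroup.add_mem _
        ((weyl_maps_lattice α hα hcart b hb').2 _ ha.2) hb.2
  | inv a _ ha => exact ⟨ha.2, by simpa using ha.1⟩

lemma corootLattice_repr {n : ℕ} (α : Fin n → V) (x : V) (hx : x ∈ corootLattice α) :
    ∃ m : Fin n → ℤ, x = ∑ j, (m j : ℝ) • coroot (α j) := by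
  induction hx using AddSubgroup.closure_induction with
  | mem y hy =>
    obtain ⟨k, rfl⟩ := hy
    refine ⟨fun j => if j = k then 1 else 0, ?_⟩
    simp [Finset.sum_ite_eq']
  | zero => exact ⟨0, by simp⟩
  | add y z _ _ hy hz =>
    obtain ⟨m1, h1⟩ := hy
    obtain ⟨m2, h2⟩ := hz
    exact ⟨m1 + m2, by simp [h1, h2, add_smul, Finset.sum_add_distrib]⟩
  | neg y _ hy =>
    obtain ⟨m, h⟩ := hy
    exact ⟨-m, by simp [h, neg_smul, Finset.sum_neg_distrib]⟩

lemma coroot_linearIndependent {n : ℕ} (α : Fin n → V) (hα : ∀ j, α j ≠ 0)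
    (hlin : LinearIndependent ℝ α) :
    LinearIndependent ℝ (fun j => coroot (α j)) := by
  have h : ∀ j, (2 / ⟪α j, α j⟫ : ℝ) ≠ 0 := by
    intro j
    have : ⟪α j, α j⟫ ≠ 0 := inner_self_ne_zero.mpr (hα j)
    exact div_ne_zero two_ne_zero this
  have h2 : (fun j => coroot (α j)) = (fun j => (Units.mk0 _ (h j) : ℝˣ) • α j) := by
    funext j; simp [coroot, Units.smul_def]
  rw [h2]
  exact hlin.units_smul (fun j => Units.mk0 _ (h j))

/-- Let `η ∈ Q^∨` with `⟨α_i, η⟩ = 1`, set `ν := A_{s_i} η` and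
`b := t^η s_i ∈ W̃`.  Let `u ∈ W` and `ζ ∈ (u (ν + ℝα_i^∨)) ∩ (η + R^∨)`.  Then:
(1) there is an integer `d ∈ ℤ` with `u⁻¹ ζ - η = d • α_i^∨`; and
(2) for this `d`, setting `y := t^{d • uη} u ∈ W̃`, one has `y b y⁻¹ = t^ζ (u s_i u⁻¹)`. -/
theorem inverse_problem_rank_one {n : ℕ}
    (α : Fin n → V) (hα : ∀ j, α j ≠ 0)
    (hlin : LinearIndependent ℝ α)
    -- crystallographic: the Cartan integers `⟨α_k, α_j^∨⟩` are integers
    (hcart : ∀ k j, ∃ m : ℤ, ⟪α k, coroot (α j)⟫ = (m : ℝ))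
    (i : Fin n)
    (η : V) (hη : η ∈ coweightLattice α) (hηi : ⟪α i, η⟫ = 1)
    (u : V ≃ₗ[ℝ] V) (huW : u ∈ weylGroup α hα)
    (ζ : V)
    (hζT : ζ ∈ ⇑u '' {x : V | ∃ r : ℝ,
        x = avgProj 2 (sRefl (α i) (hα i)) η + r • coroot (α i)})
    (hζR : ζ - η ∈ corootLattice α) :
    (∃ d : ℤ, u⁻¹ ζ - η = (d : ℝ) • coroot (α i)) ∧
    (∀ d : ℤ, u⁻¹ ζ - η = (d : ℝ) • coroot (α i) →
      Aff.mk ((d : ℝ) • (u η)) u * Aff.mk η (sRefl (α i) (hα i))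
          * (Aff.mk ((d : ℝ) • (u η)) u)⁻¹
        = Aff.mk ζ (u * sRefl (α i) (hα i) * u⁻¹)) := by
  have hsη : sRefl (α i) (hα i) η = η - coroot (α i) := by
    rw [sRefl_apply, hηi, one_smul]
  constructor
  · -- part 1
    obtain ⟨x, ⟨r, hx⟩, rfl⟩ := hζT
    have huinv : u⁻¹ (u x) = x := u.symm_apply_apply x
    have hν : avgProj 2 (sRefl (α i) (hα i)) η = η - (2⁻¹ : ℝ) • coroot (α i) := by
      simp [avgProj, Finset.sum_range_succ, hsη, smul_sub, smul_add]
      module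
    have hval : u⁻¹ (u x) - η = (r - 2⁻¹) • coroot (α i) := by
      rw [huinv, hx, hν]
      module
    -- membership in coroot lattice
    have hmem : u⁻¹ (u x) - η ∈ corootLattice α := by
      have h1 : u⁻¹ (u x - η) ∈ corootLattice α :=
        (weyl_maps_lattice α hα hcart u huW).2 _ hζR
      have h2 : u⁻¹ η - η ∈ corootLattice α :=
        (weyl_coweight_sub α hα hcart η hη u huW).2
      have : u⁻¹ (u x) - η = u⁻¹ (u x - η) + (u⁻¹ η - η) := by
        rw [map_sub]; abel
      rw [this]
      exact AddSubgroup.add_mem _ h1 h2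
    obtain ⟨m, hm⟩ := corootLattice_repr α _ hmem
    refine ⟨m i, ?_⟩
    have hli := coroot_linearIndependent α hα hlin
    have heq : ∑ j, ((if j = i then (r - 2⁻¹) else 0) - (m j : ℝ)) • coroot (α j) = 0 := by
      simp only [sub_smul, Finset.sum_sub_distrib, ← hm, ite_smul, zero_smul,
        Finset.sum_ite_eq']
      rw [hval]
      simp
      module
    have := Fintype.linearIndependent_iff.mp hli _ heq i
    simp at this
    rw [hval, show (r - 2⁻¹ : ℝ) = (m i : ℝ) by linarith]
  · -- part 2
    intro d hd
    have hζ : ζ = u η + (d : ℝ) • u (coroot (α i)) := by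
      have : u (u⁻¹ ζ) = ζ := u.apply_symm_apply ζ
      rw [← this]
      have : u⁻¹ ζ = η + (d : ℝ) • coroot (α i) := by
        rw [← sub_add_cancel (u⁻¹ ζ) η, hd]; abel
      rw [this, map_add, map_smul]
    refine Aff.ext ?_ rfl
    simp only [Aff.mul_t, Aff.mul_w, Aff.inv_t, Aff.inv_w, Aff.mul_apply_w]
    rw [hζ]
    have h1 : u⁻¹ ((d : ℝ) • u η) = (d : ℝ) • η :=
      (map_smul (u⁻¹ : V ≃ₗ[ℝ] V) _ _).trans
        (congrArg (fun z => (d : ℝ) • z) (u.symm_apply_apply η))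
    rw [h1]
    simp only [hsη, map_neg, map_smul, map_sub]
    module

end ADLV
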